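/- Let G be a finite simple graph on a nonempty vertex set V. Let d ≥ 1 and let (O_α)_{α∈V} be Hermitian d×d complex matrices with O_α² = I for all α, such that O_α O_β = −O_β O_α whenever αβ is an edge of G and O_α O_β = O_β O_α whenever α ≠ β are not adjacent in G. Then for every real vector J ∈ ℝ^V with Σ_α J_α² = 1, the operator norm satisfies ‖Σ_α J_α O_α‖² ≤ ϑ(G). -/

import Mathlib

open scoped BigOperators
open scoped Matrix

/-- A theta-feasible matrix for `G`: real symmetric PSD with trace 1 and vanishing on edges. -/
def ThetaFeasible {V : Type*} [Fintype V] (G : SimpleGraph V) (M : Matrix V V ℝ) : Prop :=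
  M.IsSymm ∧ M.PosSemidef ∧ M.trace = 1 ∧ ∀ a b, G.Adj a b → M a b = 0

/-- The Lovász theta function of `G`. -/
noncomputable def lovaszTheta {V : Type*} [Fintype V] (G : SimpleGraph V) : ℝ :=
  sSup {x : ℝ | ∃ M : Matrix V V ℝ, ThetaFeasible G M ∧ x = ∑ a, ∑ b, M a b}

/-- An H²-feasible matrix for `G`: real symmetric PSD, unit diagonal, vanishing on edges. -/
def H2Feasible {V : Type*} [Fintype V] (G : SimpleGraph V) (M : Matrix V V ℝ) : Prop :=
  M.IsSymm ∧ M.PosSemidef ∧ (∀ a, M a a = 1) ∧ ∀ a b, G.Adj a b → M a b = 0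

/-- The block matrix N = [[1, vᵀ],[v, M]]. -/
def blockN {V : Type*} [Fintype V] [DecidableEq V] (v : V → ℝ) (M : Matrix V V ℝ) :
    Matrix (Unit ⊕ V) (Unit ⊕ V) ℝ :=
  Matrix.fromBlocks 1 (Matrix.of fun _ b => v b) (Matrix.of fun a _ => v a) M

/-- An H-feasible pair for `G`. -/
def HFeasible {V : Type*} [Fintype V] [DecidableEq V] (G : SimpleGraph V)
    (v : V → ℝ) (M : Matrix V V ℝ) : Prop :=
  H2Feasible G M ∧ (blockN v M).PosSemidef

/-- `G` is vertex-transitive. -/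
def VertexTransitive {V : Type*} (G : SimpleGraph V) : Prop :=
  ∀ u w : V, ∃ g : G ≃g G, g u = w
/-- The operator norm of a complex matrix acting on ℂ^d with the standard Hermitian
inner product. -/
noncomputable def matOpNorm {m : Type*} [Fintype m] [DecidableEq m] (M : Matrix m m ℂ) : ℝ :=
  ‖Matrix.toEuclideanCLM (𝕜 := ℂ) M‖

lemma theta_bddAbove {V : Type*} [Fintype V] (G : SimpleGraph V) :
    BddAbove {x : ℝ | ∃ M : Matrix V V ℝ, ThetaFeasible G M ∧ x = ∑ a, ∑ b, M a b} := by
  classical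
  refine ⟨(Fintype.card V : ℝ), ?_⟩
  rintro x ⟨M, ⟨hs, hpsd, htr, -⟩, rfl⟩
  have hsym : ∀ a b, M b a = M a b := fun a b => by
    exact congrFun (congrFun hs a) b
  have key : ∀ a b, M a b ≤ (M a a + M b b) / 2 := by
    intro a b
    have h0 := hpsd.dotProduct_mulVec_nonneg (Pi.single a 1 - Pi.single b 1)
    simp only [star_trivial, Matrix.mulVec_sub, sub_dotProduct, dotProduct_sub,
      single_dotProduct, Matrix.mulVec_single, one_mul, mul_one,
      MulOpposite.op_one, one_smul, Matrix.col_apply] at h0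
    have h0' : (0:ℝ) ≤ M a a - M b a - (M a b - M b b) := h0
    rw [hsym a b] at h0'
    linarith
  calc ∑ a, ∑ b, M a b ≤ ∑ a, ∑ b, (M a a + M b b) / 2 := by
        exact Finset.sum_le_sum fun a _ => Finset.sum_le_sum fun b _ => key a b
    _ = (Fintype.card V : ℝ) := by
        have htr' : ∑ a, M a a = 1 := htr
        have e : ∑ a : V, ∑ b : V, (M a a + M b b) = 2 * (Fintype.card V : ℝ) := by
          simp only [Finset.sum_add_distrib, Finset.sum_const, Finset.card_univ, nsmul_eq_mul,
            ← Finset.mul_sum, htr']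
          ring
        have : ∑ a : V, ∑ b : V, (M a a + M b b) / 2
            = (∑ a : V, ∑ b : V, (M a a + M b b)) / 2 := by
          rw [Finset.sum_div]
          exact Finset.sum_congr rfl fun a _ => (Finset.sum_div _ _ _).symm
        rw [this, e]; ring

theorem stmt7 {V : Type*} [Fintype V] [Nonempty V] (G : SimpleGraph V)
    (d : ℕ) (hd : 1 ≤ d) (O : V → Matrix (Fin d) (Fin d) ℂ)
    (hHerm : ∀ a, (O a).IsHermitian)
    (hsq : ∀ a, O a * O a = 1)
    (hanti : ∀ a b, G.Adj a b → O a * O b = -(O b * O a))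
    (hcomm : ∀ a b, a ≠ b → ¬ G.Adj a b → O a * O b = O b * O a)
    (J : V → ℝ) (hJ : ∑ a, J a ^ 2 = 1) :
    matOpNorm (∑ a, (J a : ℂ) • O a) ^ 2 ≤ lovaszTheta G := by
  classical
  haveI : Nonempty (Fin d) := ⟨⟨0, hd⟩⟩
  set A : Matrix (Fin d) (Fin d) ℂ := ∑ a, (J a : ℂ) • O a with hAdef
  set T := Matrix.toEuclideanCLM (𝕜 := ℂ) A with hTdef
  -- a norm-maximizing unit vector
  obtain ⟨ψ, hψmem, hψmax⟩ :=
    (isCompact_sphere (0 : EuclideanSpace ℂ (Fin d)) 1).exists_isMaxOn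
      ⟨EuclideanSpace.single ⟨0, hd⟩ 1, by
        simp [mem_sphere_zero_iff_norm, EuclideanSpace.norm_single]⟩
      ((continuous_norm.comp T.continuous).continuousOn)
  have hψ1 : ‖ψ‖ = 1 := mem_sphere_zero_iff_norm.mp hψmem
  have hTnorm : ‖T‖ ≤ ‖T ψ‖ := by
    refine T.opNorm_le_bound (norm_nonneg _) fun x => ?_
    rcases eq_or_ne x 0 with rfl | hx
    · simp
    · have hxn : (0:ℝ) < ‖x‖ := norm_pos_iff.mpr hx
      have h1 : ‖((‖x‖⁻¹ : ℝ) : ℂ) • x‖ = 1 := by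
        rw [norm_smul, Complex.norm_real, norm_inv, norm_norm, inv_mul_cancel₀ hxn.ne']
      have h2 := hψmax (mem_sphere_zero_iff_norm.mpr h1)
      simp only [Set.mem_setOf_eq, Function.comp_apply] at h2
      rw [map_smul, norm_smul, Complex.norm_real, norm_inv, norm_norm,
        inv_mul_le_iff₀ hxn] at h2
      rw [mul_comm]
      exact h2
  -- pass to the plain function underlying ψ
  set ψv : Fin d → ℂ := fun i => ψ i with hψvdef
  have hmv : (fun i => T ψ i) = A.mulVec ψv :=
    Matrix.ofLp_toEuclideanCLM A ψ
  have hψsum : ∑ i, ‖ψv i‖ ^ 2 = 1 := by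
    have hne := EuclideanSpace.norm_eq ψ
    rw [hψ1] at hne
    have h0 : (0:ℝ) ≤ ∑ i, ‖ψ i‖ ^ 2 := Finset.sum_nonneg fun i _ => sq_nonneg _
    calc ∑ i, ‖ψv i‖ ^ 2 = Real.sqrt (∑ i, ‖ψ i‖ ^ 2) ^ 2 := (Real.sq_sqrt h0).symm
      _ = 1 := by rw [← hne]; norm_num
  -- the sesquilinear functional
  set q : Matrix (Fin d) (Fin d) ℂ → ℂ := fun P => star ψv ⬝ᵥ P.mulVec ψv with hqdef
  have hq1 : q 1 = 1 := by
    have : q 1 = ∑ i, starRingEnd ℂ (ψv i) * ψv i := by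
      simp [hqdef, Matrix.one_mulVec, dotProduct, Pi.star_apply]
    rw [this]
    have : ∀ i : Fin d, starRingEnd ℂ (ψv i) * ψv i = ((‖ψv i‖ ^ 2 : ℝ) : ℂ) := by
      intro i
      rw [← Complex.normSq_eq_conj_mul_self]
      simp [Complex.normSq_eq_norm_sq, ← Complex.ofReal_pow]
    rw [Finset.sum_congr rfl fun i _ => this i, ← Complex.ofReal_sum, hψsum,
      Complex.ofReal_one]
  have hqconj : ∀ P : Matrix (Fin d) (Fin d) ℂ, starRingEnd ℂ (q P) = q Pᴴ := by
    intro P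
    have h1 : q P = star (star (P.mulVec ψv) ⬝ᵥ ψv) := Matrix.star_dotProduct _ _
    rw [h1]
    have : starRingEnd ℂ (star (star (P.mulVec ψv) ⬝ᵥ ψv))
        = star (P.mulVec ψv) ⬝ᵥ ψv := by
      simp
    rw [this, Matrix.star_mulVec, ← Matrix.dotProduct_mulVec]
  have hqneg : ∀ P, q (-P) = - q P := by
    intro P; simp [hqdef, Matrix.neg_mulVec, dotProduct_neg]
  -- Gram identity
  have hgram : ∀ a b : V, star ((O a).mulVec ψv) ⬝ᵥ (O b).mulVec ψv = q (O a * O b) := by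
    intro a b
    rw [Matrix.star_mulVec, (hHerm a).eq, ← Matrix.dotProduct_mulVec,
      Matrix.mulVec_mulVec]
  -- quadratic form identity
  have hquad : ∀ x : V → ℝ,
      ∑ a, ∑ b, (x a * J a) * (x b * J b) * (q (O a * O b)).re
        = ∑ i, ‖(∑ a, ((x a * J a : ℝ) : ℂ) • ((O a).mulVec ψv)) i‖ ^ 2 := by
    intro x
    set c : V → ℂ := fun a => ((x a * J a : ℝ) : ℂ) with hc
    set u : V → Fin d → ℂ := fun a => (O a).mulVec ψv with hu
    set w : Fin d → ℂ := ∑ a, c a • u a with hw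
    have hcreal : ∀ a, star (c a) = c a := fun a => by simp [hc]
    have hwi : ∀ i, w i = ∑ a, c a * u a i := by
      intro i; rw [hw]; simp [Finset.sum_apply]
    have hswi : ∀ i, star w i = ∑ a, c a * star (u a i) := by
      intro i
      rw [Pi.star_apply, hwi i, star_sum]
      exact Finset.sum_congr rfl fun a _ => by rw [star_mul', hcreal]
    have hsw : star w ⬝ᵥ w = ∑ a, ∑ b, c a * c b * (star (u a) ⬝ᵥ u b) := by
      have h1 : star w ⬝ᵥ w = ∑ i, ∑ a, ∑ b, (c a * star (u a i)) * (c b * u b i) := by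
        refine Finset.sum_congr rfl fun i _ => ?_
        rw [hswi i, hwi i, Finset.sum_mul_sum]
      rw [h1, Finset.sum_comm]
      refine Finset.sum_congr rfl fun a _ => ?_
      rw [Finset.sum_comm]
      refine Finset.sum_congr rfl fun b _ => ?_
      show _ = c a * c b * ∑ i, star (u a) i * u b i
      rw [Finset.mul_sum]
      refine Finset.sum_congr rfl fun i _ => ?_
      simp only [Pi.star_apply]
      ring
    have hre : (star w ⬝ᵥ w).re = ∑ a, ∑ b, (x a * J a) * (x b * J b) * (q (O a * O b)).re := by
      rw [hsw, Complex.re_sum]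
      refine Finset.sum_congr rfl fun a _ => ?_
      rw [Complex.re_sum]
      refine Finset.sum_congr rfl fun b _ => ?_
      rw [hgram a b]
      have : c a * c b = ((x a * J a) * (x b * J b) : ℝ) := by
        simp only [hc, ← Complex.ofReal_mul]
      rw [this, Complex.re_ofReal_mul]
    have hre2 : (star w ⬝ᵥ w).re = ∑ i, ‖w i‖ ^ 2 := by
      have : star w ⬝ᵥ w = ∑ i, starRingEnd ℂ (w i) * w i := by
        simp [dotProduct, Pi.star_apply]
      rw [this, Complex.re_sum]
      refine Finset.sum_congr rfl fun i _ => ?_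
      rw [← Complex.normSq_eq_conj_mul_self]
      simp [Complex.normSq_eq_norm_sq, ← Complex.ofReal_pow]
    rw [← hre, hre2]
  -- the feasible matrix
  set M : Matrix V V ℝ := Matrix.of fun a b => J a * J b * (q (O a * O b)).re with hM
  have hMab : ∀ a b, M a b = J a * J b * (q (O a * O b)).re := fun a b => rfl
  have hMsymm : ∀ a b, M a b = M b a := by
    intro a b
    have h1 : starRingEnd ℂ (q (O a * O b)) = q (O b * O a) := by
      rw [hqconj, Matrix.conjTranspose_mul, (hHerm a).eq, (hHerm b).eq]
    have h2 : (q (O a * O b)).re = (q (O b * O a)).re := by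
      rw [← h1]; simp [Complex.conj_re]
    rw [hMab, hMab, h2]; ring
  have hfeas : ThetaFeasible G M := by
    refine ⟨?_, Matrix.posSemidef_iff_dotProduct_mulVec.mpr ⟨?_, ?_⟩, ?_, ?_⟩
    · ext a b; exact hMsymm b a
    · ext a b
      simp only [Matrix.conjTranspose_apply, star_trivial]
      exact hMsymm b a
    · intro x
      have hkey := hquad x
      have hex : star x ⬝ᵥ M.mulVec x
          = ∑ a, ∑ b, (x a * J a) * (x b * J b) * (q (O a * O b)).re := by
        simp only [star_trivial, dotProduct, Matrix.mulVec, dotProduct]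
        refine Finset.sum_congr rfl fun a _ => ?_
        rw [Finset.mul_sum]
        refine Finset.sum_congr rfl fun b _ => ?_
        rw [hMab]; ring
      rw [hex, hkey]
      exact Finset.sum_nonneg fun i _ => sq_nonneg _
    · have : ∀ a : V, M a a = J a ^ 2 := by
        intro a
        rw [hMab, hsq a, hq1]
        simp; ring
      rw [Matrix.trace]
      simp only [Matrix.diag]
      rw [Finset.sum_congr rfl fun a _ => this a, hJ]
    · intro a b hab
      have h1 : q (O a * O b) = - q (O b * O a) := by rw [hanti a b hab, hqneg]
      have h2 : starRingEnd ℂ (q (O a * O b)) = q (O b * O a) := by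
        rw [hqconj, Matrix.conjTranspose_mul, (hHerm a).eq, (hHerm b).eq]
      have h3 : (q (O a * O b)).re = 0 := by
        have e1 : (q (O a * O b)).re = - (q (O b * O a)).re := by rw [h1]; simp
        have e2 := congrArg Complex.re h2
        rw [Complex.conj_re] at e2
        linarith [e1, e2]
      rw [hMab, h3, mul_zero]
  -- sum of the entries equals ‖T ψ‖ ^ 2
  have hsumM : ∑ a, ∑ b, M a b = ‖T ψ‖ ^ 2 := by
    have h1 := hquad (fun _ => 1)
    simp only [one_mul] at h1
    have hwA : (∑ a, ((J a : ℝ) : ℂ) • ((O a).mulVec ψv)) = A.mulVec ψv := by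
      rw [hAdef]
      have : (∑ a, (J a : ℂ) • O a).mulVec ψv = ∑ a, (((J a : ℂ) • O a).mulVec ψv) := by
        induction (Finset.univ : Finset V) using Finset.cons_induction with
        | empty => simp [Matrix.zero_mulVec]
        | cons a s ha ih => simp only [Finset.sum_cons, Matrix.add_mulVec, ih]
      rw [this]
      exact (Finset.sum_congr rfl fun a _ => Matrix.smul_mulVec _ _ _).symm
    have hnrm : ‖T ψ‖ ^ 2 = ∑ i, ‖A.mulVec ψv i‖ ^ 2 := by
      have h0 : (0:ℝ) ≤ ∑ i, ‖T ψ i‖ ^ 2 := Finset.sum_nonneg fun i _ => sq_nonneg _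
      rw [EuclideanSpace.norm_eq, Real.sq_sqrt h0]
      exact Finset.sum_congr rfl fun i _ => by rw [congrFun hmv i]
    rw [hnrm, ← hwA, ← h1]
    refine Finset.sum_congr rfl fun a _ => Finset.sum_congr rfl fun b _ => ?_
    rw [hMab]
  -- conclude
  have hmem : ‖T ψ‖ ^ 2 ∈
      {x : ℝ | ∃ M : Matrix V V ℝ, ThetaFeasible G M ∧ x = ∑ a, ∑ b, M a b} :=
    ⟨M, hfeas, hsumM.symm⟩
  have hle : ‖T ψ‖ ^ 2 ≤ lovaszTheta G := le_csSup (theta_bddAbove G) hmem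
  have : matOpNorm A ^ 2 ≤ ‖T ψ‖ ^ 2 := by
    rw [matOpNorm, ← hTdef]
    exact pow_le_pow_left₀ (norm_nonneg _) hTnorm 2
  linarith
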